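/- For every nonzero vector x ∈ ℝⁿ, one has ν_min ≤ (xᵀA B⁻¹A x)/(xᵀA x) ≤ ν_max. (The pencils (A,B) and (AB⁻¹A, A) share the same extreme Rayleigh-quotient bounds.) -/

import Mathlib

open Matrix

/-- Symmetry of a hermitian real bilinear form. -/
lemma aux_symm {n : ℕ} {M : Matrix (Fin n) (Fin n) ℝ} (hM : M.IsHermitian)
    (u v : Fin n → ℝ) : u ⬝ᵥ M *ᵥ v = v ⬝ᵥ M *ᵥ u := by
  have hT : Mᵀ = M := by simpa using hM.eq
  rw [Matrix.dotProduct_mulVec, ← mulVec_transpose, hT, dotProduct_comm]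

/-- Cauchy–Schwarz for a positive semidefinite real bilinear form. -/
lemma aux_cs {n : ℕ} {M : Matrix (Fin n) (Fin n) ℝ} (hM : M.PosSemidef)
    (u v : Fin n → ℝ) : (u ⬝ᵥ M *ᵥ v) ^ 2 ≤ (u ⬝ᵥ M *ᵥ u) * (v ⬝ᵥ M *ᵥ v) := by
  have key : ∀ t : ℝ, 0 ≤ (v ⬝ᵥ M *ᵥ v) * (t * t) + (2 * (u ⬝ᵥ M *ᵥ v)) * t + u ⬝ᵥ M *ᵥ u := by
    intro t
    have h0 := hM.dotProduct_mulVec_nonneg (u + t • v)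
    simp only [star_trivial] at h0
    have expand : (u + t • v) ⬝ᵥ M *ᵥ (u + t • v)
        = (v ⬝ᵥ M *ᵥ v) * (t * t) + (2 * (u ⬝ᵥ M *ᵥ v)) * t + u ⬝ᵥ M *ᵥ u := by
      rw [mulVec_add, mulVec_smul, add_dotProduct, smul_dotProduct, dotProduct_add,
        dotProduct_add, dotProduct_smul, dotProduct_smul, aux_symm hM.1 v u]
      simp only [smul_eq_mul]
      ring
    linarith [expand ▸ h0]
  have hd : discrim (v ⬝ᵥ M *ᵥ v) (2 * (u ⬝ᵥ M *ᵥ v)) (u ⬝ᵥ M *ᵥ u) ≤ 0 :=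
    discrim_le_zero key
  unfold discrim at hd
  nlinarith [hd]

/-- The pencils (A,B) and (AB⁻¹A,A) share the same extreme Rayleigh-quotient bounds. -/
theorem statement_6 {n : ℕ}
    (A B : Matrix (Fin n) (Fin n) ℝ)
    (hA : A.PosDef) (hB : B.PosDef)
    (νmin νmax : ℝ) (hνmin : 0 < νmin) (hνmax : 0 < νmax)
    (hν : ∀ z, νmin * (z ⬝ᵥ B *ᵥ z) ≤ z ⬝ᵥ A *ᵥ z ∧ z ⬝ᵥ A *ᵥ z ≤ νmax * (z ⬝ᵥ B *ᵥ z))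
    (x : Fin n → ℝ) (hx : x ≠ 0) :
    νmin ≤ (x ⬝ᵥ (A * B⁻¹ * A) *ᵥ x) / (x ⬝ᵥ A *ᵥ x) ∧
      (x ⬝ᵥ (A * B⁻¹ * A) *ᵥ x) / (x ⬝ᵥ A *ᵥ x) ≤ νmax := by
  set w : Fin n → ℝ := B⁻¹ *ᵥ (A *ᵥ x) with hw
  have hBdet : IsUnit B.det := isUnit_iff_ne_zero.mpr hB.det_pos.ne'
  have hBw : B *ᵥ w = A *ᵥ x := by
    rw [hw, mulVec_mulVec, mul_nonsing_inv B hBdet, one_mulVec]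
  have ha : 0 < x ⬝ᵥ A *ᵥ x := by simpa using hA.dotProduct_mulVec_pos hx
  -- numerator equals w ⬝ᵥ B *ᵥ w
  have hnum : x ⬝ᵥ (A * B⁻¹ * A) *ᵥ x = w ⬝ᵥ B *ᵥ w := by
    rw [hBw, aux_symm hA.1 w x, ← mulVec_mulVec, ← mulVec_mulVec, ← hw]
  set N : ℝ := w ⬝ᵥ B *ᵥ w with hN
  -- key identities
  have hxBw : x ⬝ᵥ B *ᵥ w = x ⬝ᵥ A *ᵥ x := by rw [hBw]
  have hwAx : w ⬝ᵥ A *ᵥ x = N := by rw [hN, hBw]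
  -- lower bound: νmin * a ≤ N via Cauchy-Schwarz in B
  have csB := aux_cs hB.posSemidef x w
  have hxBx : νmin * (x ⬝ᵥ B *ᵥ x) ≤ x ⬝ᵥ A *ᵥ x := (hν x).1
  have hlow : νmin * (x ⬝ᵥ A *ᵥ x) ≤ N := by
    rw [hxBw] at csB
    have hNnn : 0 ≤ N := by simpa [hN] using hB.posSemidef.dotProduct_mulVec_nonneg w
    nlinarith [mul_le_mul_of_nonneg_right hxBx hNnn,
      mul_le_mul_of_nonneg_left csB hνmin.le, ha]
  -- upper bound: N ≤ νmax * a via Cauchy-Schwarz in A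
  have csA := aux_cs hA.posSemidef w x
  have hwAw : w ⬝ᵥ A *ᵥ w ≤ νmax * N := by simpa [hN] using (hν w).2
  have hNpos : 0 < N := lt_of_lt_of_le (by positivity) hlow
  have hup : N ≤ νmax * (x ⬝ᵥ A *ᵥ x) := by
    rw [hwAx] at csA
    nlinarith [csA, hwAw, hNpos, ha]
  constructor
  · rw [hnum, le_div_iff₀ ha]; linarith
  · rw [hnum, div_le_iff₀ ha]; linarith
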